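/- Let A = A⁻¹ be a finite set of isometries of a Hadamard space X (complete CAT(0)), and define L(A) = inf_{x∈X} max_{g∈A} d(x, gx). Then for every positive integer m, L(A^m) ≥ (√m / 2) · L(A), where A^m is the set of products of at most m elements of A. -/

import Mathlib

set_option maxHeartbeats 1000000

open Set

def IsGeodesicSegment {X : Type*} [MetricSpace X] (f : ℝ → X) (x y : X) : Prop :=
  f 0 = x ∧ f (dist x y) = y ∧
    ∀ s ∈ Set.Icc (0:ℝ) (dist x y), ∀ t ∈ Set.Icc (0:ℝ) (dist x y),
      dist (f s) (f t) = |s - t|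

def CATzero (X : Type*) [MetricSpace X] : Prop :=
  ∀ (a b c : X) (a' b' c' : EuclideanSpace ℝ (Fin 2)),
    dist a b = dist a' b' → dist b c = dist b' c' → dist a c = dist a' c' →
    ∀ (f : ℝ → X) (f' : ℝ → EuclideanSpace ℝ (Fin 2)),
      IsGeodesicSegment f b c → IsGeodesicSegment f' b' c' →
      ∀ t ∈ Set.Icc (0:ℝ) (dist b c), dist a (f t) ≤ dist a' (f' t)

noncomputable def jointDisplacement {G X : Type*} [Group G] [MetricSpace X]
    [MulAction G X] (A : Set G) : ℝ :=
  ⨅ x : X, ⨆ g ∈ A, dist x (g • x)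

def prodSet {G : Type*} [Group G] (A : Set G) (m : ℕ) : Set G :=
  {g : G | ∃ l : List G, l.length ≤ m ∧ (∀ y ∈ l, y ∈ A) ∧ l.prod = g}

namespace BF

noncomputable def pt (a b : ℝ) : EuclideanSpace ℝ (Fin 2) :=
  (WithLp.equiv 2 (Fin 2 → ℝ)).symm ![a, b]

lemma pt_dist (a b c d : ℝ) : dist (pt a b) (pt c d) = Real.sqrt ((a-c)^2 + (b-d)^2) := by
  rw [EuclideanSpace.dist_eq, Fin.sum_univ_two]
  simp [pt, Real.dist_eq, sq_abs]

lemma cn_midpoint {X : Type*} [MetricSpace X] (hCAT : CATzero X)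
    {f : ℝ → X} {b c : X} (hf : IsGeodesicSegment f b c) (a : X) :
    dist a (f (dist b c / 2)) ^ 2 ≤
      dist a b ^ 2 / 2 + dist a c ^ 2 / 2 - dist b c ^ 2 / 4 := by
  set α := dist a b with hα
  set β := dist a c with hβ
  set γ := dist b c with hγ
  have hα0 : 0 ≤ α := dist_nonneg
  have hβ0 : 0 ≤ β := dist_nonneg
  have hγ0 : 0 ≤ γ := dist_nonneg
  rcases eq_or_lt_of_le hγ0 with hγz | hγpos
  · have hbc : b = c := by rw [← dist_eq_zero, ← hγ, ← hγz]
    have hfb : f (γ/2) = b := by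
      have := hf.1
      rw [← hγz]; simpa using this
    rw [hfb, ← hγz]
    subst hbc
    nlinarith [sq_nonneg (dist a b)]
  · have ht1 : α ≤ β + γ := by rw [hα, hβ, hγ]; exact dist_triangle_right a b c
    have ht2 : β ≤ α + γ := by rw [hα, hβ, hγ]; exact dist_triangle a b c
    have ht3 : γ ≤ α + β := by
      rw [hα, hβ, hγ, dist_comm a b]
      exact dist_triangle b a c
    set p := (α^2 + γ^2 - β^2)/(2*γ) with hp
    have e1 : 0 ≤ β + γ - α := by linarith
    have e2 : 0 ≤ α + γ - β := by linarith
    have e3 : 0 ≤ α + β - γ := by linarith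
    have e4 : 0 ≤ α + β + γ := by linarith
    have hqnn : 0 ≤ α^2 - p^2 := by
      have key : (α^2 + γ^2 - β^2)^2 ≤ (2*γ*α)^2 := by
        nlinarith [mul_nonneg (mul_nonneg e1 e2) (mul_nonneg e3 e4)]
      have h2γ : (0:ℝ) < (2*γ)^2 := by positivity
      have hpe : p^2 = (α^2 + γ^2 - β^2)^2 / (2*γ)^2 := by
        rw [hp, div_pow]
      rw [sub_nonneg, hpe, div_le_iff₀ h2γ]
      nlinarith
    set q := Real.sqrt (α^2 - p^2) with hq
    have hq2 : q^2 = α^2 - p^2 := Real.sq_sqrt hqnn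
    have hpγ : p * (2*γ) = α^2 + γ^2 - β^2 := by
      rw [hp]; field_simp
    have hab' : dist (pt p q) (pt 0 0) = α := by
      rw [pt_dist, sub_zero, sub_zero]
      rw [show p^2 + q^2 = α^2 by rw [hq2]; ring]
      exact Real.sqrt_sq hα0
    have hbc' : dist (pt 0 0) (pt γ 0) = γ := by
      rw [pt_dist]
      rw [show ((0:ℝ)-γ)^2 + ((0:ℝ)-0)^2 = γ^2 by ring]
      exact Real.sqrt_sq hγ0
    have hac' : dist (pt p q) (pt γ 0) = β := by
      rw [pt_dist, sub_zero]
      rw [show (p-γ)^2 + q^2 = β^2 by rw [hq2]; nlinarith [hpγ]]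
      exact Real.sqrt_sq hβ0
    have hf' : IsGeodesicSegment (fun t => pt t 0) (pt 0 0) (pt γ 0) := by
      refine ⟨rfl, ?_, ?_⟩
      · rw [hbc']
      · intro s _ t _
        show dist (pt s 0) (pt t 0) = |s - t|
        rw [pt_dist]
        rw [show (s-t)^2 + ((0:ℝ)-0)^2 = (s-t)^2 by ring]
        exact Real.sqrt_sq_eq_abs _
    have hcomp := hCAT a b c (pt p q) (pt 0 0) (pt γ 0)
      hab'.symm hbc'.symm hac'.symm
      f (fun t => pt t 0) hf hf' (γ/2) ⟨by linarith, by linarith⟩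
    have hrhs : dist (pt p q) (pt (γ/2) 0) ^ 2 = α^2/2 + β^2/2 - γ^2/4 := by
      rw [pt_dist, sub_zero, Real.sq_sqrt (by positivity)]
      linear_combination hq2 - (1/2) * hpγ
    calc dist a (f (γ/2)) ^ 2 ≤ dist (pt p q) (pt (γ/2) 0) ^ 2 := by
          have h0 : (0:ℝ) ≤ dist a (f (γ/2)) := dist_nonneg
          exact pow_le_pow_left₀ h0 hcomp 2
      _ = α^2/2 + β^2/2 - γ^2/4 := hrhs

section Disp

variable {G X : Type*} [Group G] [MetricSpace X] [MulAction G X]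

lemma one_mem_prodSet (A : Set G) (k : ℕ) : (1:G) ∈ prodSet A k :=
  ⟨[], by simp, by simp, List.prod_nil⟩

lemma prodSet_mono {A : Set G} {j k : ℕ} (h : j ≤ k) : prodSet A j ⊆ prodSet A k := by
  rintro g ⟨l, hl, hA, hp⟩
  exact ⟨l, hl.trans h, hA, hp⟩

lemma mul_mem_prodSet {A : Set G} {g a : G} {k : ℕ} (hg : g ∈ A) (ha : a ∈ prodSet A k) :
    g * a ∈ prodSet A (k+1) := by
  obtain ⟨l, hl, hA, hp⟩ := ha
  refine ⟨g :: l, by simpa using Nat.succ_le_succ hl, ?_, by rw [List.prod_cons, hp]⟩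
  intro y hy
  rcases List.mem_cons.1 hy with h | h
  · rwa [h]
  · exact hA y h

lemma inv_mem {A : Set G} {g : G} (hsymm : A⁻¹ = A) (hg : g ∈ A) : g⁻¹ ∈ A := by
  rw [← hsymm]; simpa using hg

/-- sup of distances from `z` to the `prodSet A j`-orbit of `x`. -/
noncomputable def T (A : Set G) (x : X) (j : ℕ) (z : X) : ℝ :=
  ⨆ a ∈ prodSet A j, dist z (a • x)

/-- the Chebyshev radius of the `prodSet A j`-orbit of `x`. -/
noncomputable def rho (A : Set G) (x : X) (j : ℕ) : ℝ :=
  ⨅ z : X, T A x j z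

variable (hiso : ∀ g : G, Isometry fun x : X => g • x) {A : Set G} (hfin : A.Finite)

include hiso hfin in
lemma exists_bound (x z : X) (j : ℕ) :
    ∃ B : ℝ, 0 ≤ B ∧ ∀ a ∈ prodSet A j, dist z (a • x) ≤ B := by
  obtain ⟨C, hC⟩ := (hfin.image fun g => dist x (g • x)).bddAbove
  have hC₀0 : (0:ℝ) ≤ max C 0 := le_max_right _ _
  have hC₀ : ∀ g ∈ A, dist x (g • x) ≤ max C 0 := fun g hg =>
    le_trans (hC ⟨g, hg, rfl⟩) (le_max_left _ _)
  have hlist : ∀ l : List G, (∀ y ∈ l, y ∈ A) →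
      dist x (l.prod • x) ≤ l.length * max C 0 := by
    intro l
    induction l with
    | nil => intro _; simp
    | cons g t ih =>
      intro hmem
      have hg : g ∈ A := hmem g List.mem_cons_self
      have ht : ∀ y ∈ t, y ∈ A := fun y hy => hmem y (List.mem_cons_of_mem g hy)
      have h2 : dist (g • x) ((g * t.prod) • x) = dist x (t.prod • x) := by
        rw [mul_smul]
        exact (hiso g).dist_eq x (t.prod • x)
      calc dist x ((g :: t).prod • x)
          ≤ dist x (g • x) + dist (g • x) ((g * t.prod) • x) := by
            rw [List.prod_cons]; exact dist_triangle _ _ _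
        _ = dist x (g • x) + dist x (t.prod • x) := by rw [h2]
        _ ≤ max C 0 + t.length * max C 0 := add_le_add (hC₀ g hg) (ih ht)
        _ = (g :: t).length * max C 0 := by
            rw [List.length_cons]; push_cast; ring
  refine ⟨dist z x + j * max C 0, by positivity, ?_⟩
  rintro a ⟨l, hl, hA, rfl⟩
  calc dist z (l.prod • x) ≤ dist z x + dist x (l.prod • x) := dist_triangle _ _ _
    _ ≤ dist z x + l.length * max C 0 := add_le_add le_rfl (hlist l hA)
    _ ≤ dist z x + j * max C 0 := by
        have h1 : (l.length : ℝ) ≤ (j : ℝ) := Nat.cast_le.2 hl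
        nlinarith

include hiso hfin in
lemma le_T (x z : X) {j : ℕ} {a : G} (ha : a ∈ prodSet A j) :
    dist z (a • x) ≤ T A x j z := by
  obtain ⟨B, hB0, hB⟩ := exists_bound hiso hfin x z j
  have h1 : dist z (a • x) ≤ ⨆ _ : a ∈ prodSet A j, dist z (a • x) :=
    le_ciSup (f := fun _ : a ∈ prodSet A j => dist z (a • x))
      ⟨dist z (a • x), by rintro _ ⟨_, rfl⟩; exact le_rfl⟩ ha
  refine h1.trans (le_ciSup (f := fun a : G => ⨆ _ : a ∈ prodSet A j, dist z (a • x)) ?_ a)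
  exact ⟨B, by rintro _ ⟨b, rfl⟩; exact Real.iSup_le (fun hb => hB b hb) hB0⟩

lemma T_nonneg (A : Set G) (x z : X) (j : ℕ) : 0 ≤ T A x j z :=
  Real.iSup_nonneg fun a => Real.iSup_nonneg fun _ => dist_nonneg

lemma T_le (x z : X) (j : ℕ) {B : ℝ} (hB0 : 0 ≤ B)
    (hB : ∀ a ∈ prodSet A j, dist z (a • x) ≤ B) : T A x j z ≤ B :=
  Real.iSup_le (fun a => Real.iSup_le (fun ha => hB a ha) hB0) hB0

lemma rho_nonneg [Nonempty X] (A : Set G) (x : X) (j : ℕ) : 0 ≤ rho A x j :=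
  le_ciInf fun z => T_nonneg A x z j

lemma rho_le (A : Set G) (x z : X) (j : ℕ) : rho A x j ≤ T A x j z :=
  ciInf_le ⟨0, by rintro _ ⟨z', rfl⟩; exact T_nonneg A x z' j⟩ z

include hiso hfin in
lemma T_mono (x z : X) {j k : ℕ} (hjk : j ≤ k) : T A x j z ≤ T A x k z :=
  T_le x z j (T_nonneg A x z k)
    (fun a ha => le_T hiso hfin x z (prodSet_mono hjk ha))

end Disp

end BF

theorem jointDisplacement_prodSet_ge
    {G X : Type*} [Group G] [MetricSpace X] [Nonempty X] [CompleteSpace X]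
    [MulAction G X]
    (hiso : ∀ g : G, Isometry fun x : X => g • x)
    (hGeod : ∀ x y : X, ∃ f : ℝ → X, IsGeodesicSegment f x y)
    (hCAT : CATzero X)
    (A : Set G) (hfin : A.Finite) (hsymm : A⁻¹ = A) (hne : A.Nonempty)
    (m : ℕ) (hm : 1 ≤ m) :
    Real.sqrt m / 2 * jointDisplacement (X := X) A ≤
      jointDisplacement (X := X) (prodSet A m) := by
  open BF in
  have hL0 : 0 ≤ jointDisplacement (X := X) A :=
    le_ciInf fun z => Real.iSup_nonneg fun g => Real.iSup_nonneg fun _ => dist_nonneg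
  have hLle : ∀ z : X, jointDisplacement (X := X) A ≤ ⨆ g ∈ A, dist z (g • z) := by
    intro z
    exact ciInf_le ⟨0, by
      rintro _ ⟨z', rfl⟩
      exact Real.iSup_nonneg fun g => Real.iSup_nonneg fun _ => dist_nonneg⟩ z
  rw [jointDisplacement]
  refine le_ciInf fun x => ?_
  -- the key inductive inequality on Chebyshev radii
  have hkey : ∀ k : ℕ,
      jointDisplacement (X := X) A ^ 2 / 4 + BF.rho A x k ^ 2 ≤ BF.rho A x (k+1) ^ 2 := by
    intro k
    refine le_of_forall_pos_le_add ?_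
    intro δ hδ
    have hρ1 : (0:ℝ) < 2 * BF.rho A x (k+1) + 1 := by
      nlinarith [BF.rho_nonneg (X := X) A x (k+1)]
    obtain ⟨ε, hε, hε1, hε2⟩ :
        ∃ ε : ℝ, 0 < ε ∧ ε ≤ 1 ∧ ε * (2 * BF.rho A x (k+1) + 1) ≤ δ := by
      refine ⟨min 1 (δ/(2 * BF.rho A x (k+1) + 1)), lt_min one_pos (by positivity),
        min_le_left _ _, ?_⟩
      rw [← le_div_iff₀ hρ1]
      exact min_le_right _ _
    obtain ⟨c, hc⟩ := exists_lt_of_ciInf_lt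
      (show BF.rho A x (k+1) < BF.rho A x (k+1) + ε by linarith)
    have hcR : BF.T A x (k+1) c ≤ BF.rho A x (k+1) + ε := hc.le
    have hρnn := BF.rho_nonneg (X := X) A x
    have hρkR : BF.rho A x k ≤ BF.rho A x (k+1) + ε :=
      le_trans (BF.rho_le A x c k) (le_trans (BF.T_mono hiso hfin x c (Nat.le_succ k)) hcR)
    have hynn : 0 ≤ (BF.rho A x (k+1) + ε)^2 - BF.rho A x k ^ 2 := by
      nlinarith [hρnn k]
    have hdisp : ∀ g ∈ A, dist c (g • c) ≤
        2 * Real.sqrt ((BF.rho A x (k+1) + ε)^2 - BF.rho A x k ^ 2) := by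
      intro g hg
      obtain ⟨f, hf⟩ := hGeod c (g • c)
      have hsub : ∀ a ∈ prodSet A k, dist (a • x) (f (dist c (g • c) / 2)) ^ 2 ≤
          (BF.rho A x (k+1) + ε)^2 - dist c (g • c)^2/4 := by
        intro a ha
        have h1 : dist (a • x) c ≤ BF.rho A x (k+1) + ε := by
          rw [dist_comm]
          exact le_trans (BF.le_T hiso hfin x c (BF.prodSet_mono (Nat.le_succ k) ha)) hcR
        have h2 : dist (a • x) (g • c) ≤ BF.rho A x (k+1) + ε := by
          have heq : dist (a • x) (g • c) = dist c ((g⁻¹ * a) • x) := by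
            rw [← (hiso g⁻¹).dist_eq (a • x) (g • c)]
            show dist (g⁻¹ • a • x) (g⁻¹ • g • c) = _
            rw [inv_smul_smul, ← mul_smul, dist_comm]
          rw [heq]
          exact le_trans (BF.le_T hiso hfin x c
            (BF.mul_mem_prodSet (BF.inv_mem hsymm hg) ha)) hcR
        have hcn := BF.cn_midpoint hCAT hf (a • x)
        have hd1 : 0 ≤ dist (a • x) c := dist_nonneg
        have hd2 : 0 ≤ dist (a • x) (g • c) := dist_nonneg
        nlinarith
      have hγy : 0 ≤ (BF.rho A x (k+1) + ε)^2 - dist c (g • c)^2/4 := by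
        have h1 := hsub 1 (BF.one_mem_prodSet A k)
        nlinarith [sq_nonneg (dist ((1:G) • x) (f (dist c (g • c) / 2)))]
      have hTk : BF.T A x k (f (dist c (g • c) / 2)) ≤
          Real.sqrt ((BF.rho A x (k+1) + ε)^2 - dist c (g • c)^2/4) := by
        refine BF.T_le x _ k (Real.sqrt_nonneg _) ?_
        intro a ha
        rw [dist_comm]
        exact (Real.le_sqrt dist_nonneg hγy).2 (hsub a ha)
      have hρk2 : BF.rho A x k ^ 2 ≤ (BF.rho A x (k+1) + ε)^2 - dist c (g • c)^2/4 :=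
        (Real.le_sqrt (hρnn k) hγy).1 (le_trans (BF.rho_le A x _ k) hTk)
      have hd2 : dist c (g • c)^2 ≤ 4*((BF.rho A x (k+1) + ε)^2 - BF.rho A x k ^2) := by
        linarith
      have h4y : Real.sqrt (4*((BF.rho A x (k+1) + ε)^2 - BF.rho A x k ^2)) =
          2 * Real.sqrt ((BF.rho A x (k+1) + ε)^2 - BF.rho A x k ^2) := by
        rw [show (4:ℝ)*((BF.rho A x (k+1) + ε)^2 - BF.rho A x k ^2)
            = 2^2 * ((BF.rho A x (k+1) + ε)^2 - BF.rho A x k ^2) by ring,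
          Real.sqrt_mul (by positivity), Real.sqrt_sq (by norm_num)]
      rw [← h4y]
      exact (Real.le_sqrt dist_nonneg (by positivity)).2 hd2
    have hsupA : (⨆ g ∈ A, dist c (g • c)) ≤
        2 * Real.sqrt ((BF.rho A x (k+1) + ε)^2 - BF.rho A x k ^ 2) :=
      Real.iSup_le (fun g => Real.iSup_le (fun hg => hdisp g hg) (by positivity)) (by positivity)
    have hLR : jointDisplacement (X := X) A ≤
        2 * Real.sqrt ((BF.rho A x (k+1) + ε)^2 - BF.rho A x k ^ 2) :=
      le_trans (hLle c) hsupA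
    have hsq := Real.sq_sqrt hynn
    have hL2 : jointDisplacement (X := X) A ^ 2 ≤
        4*((BF.rho A x (k+1) + ε)^2 - BF.rho A x k ^ 2) := by
      nlinarith [Real.sqrt_nonneg ((BF.rho A x (k+1) + ε)^2 - BF.rho A x k ^ 2)]
    nlinarith [hρnn (k+1)]
  -- induct
  have hind : ∀ k : ℕ, (k:ℝ) * jointDisplacement (X := X) A ^ 2 / 4 ≤ BF.rho A x k ^ 2 := by
    intro k
    induction k with
    | zero => simpa using sq_nonneg (BF.rho A x 0)
    | succ n ih =>
      have := hkey n
      push_cast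
      nlinarith
  have hρnn := BF.rho_nonneg (X := X) A x
  have hTm := BF.rho_le A x x m
  have hfinal : (m:ℝ) * jointDisplacement (X := X) A ^ 2 / 4 ≤ BF.T A x m x ^ 2 := by
    have h2 : BF.rho A x m ^ 2 ≤ BF.T A x m x ^ 2 := by
      nlinarith [hρnn m, BF.T_nonneg A x x m]
    linarith [hind m]
  have hgoal2 : (Real.sqrt m / 2 * jointDisplacement (X := X) A)^2 ≤ BF.T A x m x ^ 2 := by
    have he : (Real.sqrt m / 2 * jointDisplacement (X := X) A)^2
        = (m:ℝ) * jointDisplacement (X := X) A ^ 2 / 4 := by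
      rw [mul_pow, div_pow, Real.sq_sqrt (by positivity : (0:ℝ) ≤ (m:ℝ))]
      ring
    rw [he]
    exact hfinal
  have h1 : 0 ≤ Real.sqrt m / 2 * jointDisplacement (X := X) A := by positivity
  exact (pow_le_pow_iff_left₀ h1 (BF.T_nonneg A x x m) (by norm_num)).1 hgoal2
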